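/- Let B be a left brace with B³ = 0 and let b₁,…,b_m, b_k ∈ B, with integers n₁,…,n_m, z. Writing b_{st} = b_s ∗ b_t and b_{stu} = (b_s ∗ b_t) ∗ b_u, it holds that (Σᵢ nᵢ·bᵢ) ∗ (z·b_k) = Σᵢ (nᵢz·b_{ik} − (nᵢ(nᵢ−1)z/2)·b_{iik}) − Σ_{i<j} nᵢnⱼz·b_{ijk}, where sums and scalar multiples are in the additive group. -/

import Mathlib

/-- A left brace: an abelian group `(B,+)` and a group `(B,·)` on the same set,
with common identity (`0 = 1`), satisfying `a·(b+c) = a·b − a + a·c`. -/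
class LeftBrace (B : Type*) extends AddCommGroup B, Group B where
  zero_eq_one : (0 : B) = 1
  brace_distrib : ∀ a b c : B, a * (b + c) = a * b - a + a * c

/-- The star operation `a ∗ b = a·b − a − b`. -/
def bstar {B : Type*} [LeftBrace B] (a b : B) : B := a * b - a - b

namespace BraceAux

variable {B : Type*} [LeftBrace B]

lemma mul_zero' (a : B) : a * 0 = a := by
  rw [LeftBrace.zero_eq_one, mul_one]

lemma star_add_right (a x y : B) : bstar a (x + y) = bstar a x + bstar a y := by
  simp only [bstar, LeftBrace.brace_distrib]
  abel

lemma star_zero_right (a : B) : bstar a 0 = 0 := by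
  simp only [bstar, mul_zero']
  abel

/-- `bstar a ·` as an additive hom. -/
def starHom (a : B) : B →+ B := AddMonoidHom.mk' (fun x => bstar a x) (star_add_right a)

lemma star_neg_right (a x : B) : bstar a (-x) = - bstar a x :=
  map_neg (starHom a) x

lemma star_zsmul_right (a : B) (z : ℤ) (x : B) : bstar a (z • x) = z • bstar a x :=
  map_zsmul (starHom a) z x

lemma star_sum_right {m : ℕ} (a : B) (h : Fin m → B) :
    bstar a (∑ i, h i) = ∑ i, bstar a (h i) :=
  map_sum (starHom a) h Finset.univ

lemma zero_star (a : B) : bstar 0 a = 0 := by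
  have h : (0 : B) * a = a := by rw [LeftBrace.zero_eq_one, one_mul]
  simp only [bstar, h]
  abel

lemma mul_neg' (a b : B) : a * (-b) = a - a * b + a := by
  have h := LeftBrace.brace_distrib a b (-b)
  rw [add_neg_cancel, mul_zero'] at h
  have h2 : a * (-b) = a - (a * b - a) := eq_sub_of_add_eq' h.symm
  rw [h2]; abel

lemma mul_star (x y c : B) :
    bstar (x * y) c = bstar x (bstar y c) + bstar x c + bstar y c := by
  simp only [bstar]
  have e1 : y * c - y - c = y * c + ((-y) + (-c)) := by abel
  rw [e1, LeftBrace.brace_distrib x (y*c) ((-y) + (-c)),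
      LeftBrace.brace_distrib x (-y) (-c), mul_neg', mul_neg', mul_assoc]
  abel

section WithHB3

variable (hB3 : ∀ a b c : B, bstar a (bstar b c) = 0)
include hB3

lemma mul_star' (x y c : B) : bstar (x * y) c = bstar x c + bstar y c := by
  rw [mul_star, hB3, zero_add]

/-- If `s` is killed by all stars on the right, then star is additive when adding `s`. -/
lemma add_fix_star {s : B} (hs : ∀ a : B, bstar a s = 0) (y c : B) :
    bstar (y + s) c = bstar y c + bstar s c := by
  have h0 : y * s - y - s = 0 := hs y
  have h : y * s = y + s := by
    have := sub_eq_zero.mp (by rw [sub_sub] at h0; exact h0)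
    exact this
  rw [← h, mul_star' hB3]

lemma neg_fix_star {s : B} (hs : ∀ a : B, bstar a s = 0) (c : B) :
    bstar (-s) c = - bstar s c := by
  have h := add_fix_star hB3 hs (-s) c
  rw [neg_add_cancel, zero_star] at h
  exact add_eq_zero_iff_eq_neg.mp h.symm

lemma add_star (x y c : B) :
    bstar (x + y) c = bstar x c + bstar y c - bstar (bstar x y) c := by
  have hsfix : ∀ a : B, bstar a (bstar x y) = 0 := fun a => hB3 a x y
  have hsnfix : ∀ a : B, bstar a (-(bstar x y)) = 0 := fun a => by
    rw [star_neg_right, hsfix a, neg_zero]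
  have hw : bstar x (y - bstar x y) = bstar x y := by
    rw [sub_eq_add_neg, star_add_right, star_neg_right, hB3 x x y, neg_zero, add_zero]
  have h2 : x * (y - bstar x y) - x - (y - bstar x y) = bstar x y := hw
  have hxw : x * (y - bstar x y) = x + y := by
    calc x * (y - bstar x y)
        = (x * (y - bstar x y) - x - (y - bstar x y)) + x + (y - bstar x y) := by abel
      _ = bstar x y + x + (y - bstar x y) := by rw [h2]
      _ = x + y := by abel
  calc bstar (x + y) c = bstar (x * (y - bstar x y)) c := by rw [hxw]
    _ = bstar x c + bstar (y - bstar x y) c := mul_star' hB3 _ _ _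
    _ = bstar x c + (bstar y c + bstar (-(bstar x y)) c) := by
        rw [sub_eq_add_neg, add_fix_star hB3 hsnfix y c]
    _ = bstar x c + bstar y c - bstar (bstar x y) c := by
        rw [neg_fix_star hB3 hsfix]; abel

/-- Triple stars are killed on the left. -/
lemma triple_star (p q r d : B) : bstar (bstar (bstar p q) r) d = 0 := by
  have hu : ∀ a : B, bstar a (bstar p q) = 0 := fun a => hB3 a p q
  have h1 := add_star hB3 (bstar p q) r d
  have h2 : bstar (bstar p q + r) d = bstar r d + bstar (bstar p q) d := by
    rw [add_comm]; exact add_fix_star hB3 hu r d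
  have h3 : bstar (bstar (bstar p q) r) d
      = bstar (bstar p q) d + bstar r d - bstar (bstar p q + r) d := by
    rw [h1]; abel
  rw [h3, h2]; abel

lemma fix_zsmul_star {s : B} (hs : ∀ a : B, bstar a s = 0) (z : ℤ) (c : B) :
    bstar (z • s) c = z • bstar s c := by
  have hsn : ∀ a : B, bstar a (-s) = 0 := fun a => by rw [star_neg_right, hs a, neg_zero]
  induction z using Int.induction_on with
  | zero => rw [zero_smul, zero_star, zero_smul]
  | succ k ih =>
      have : ((k : ℤ) + 1) • s = (k : ℤ) • s + s := by rw [add_smul, one_smul]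
      rw [this, add_fix_star hB3 hs, ih, add_smul, one_smul]
  | pred k ih =>
      have : (-(k : ℤ) - 1) • s = (-(k : ℤ)) • s + (-s) := by
        rw [sub_smul, one_smul, sub_eq_add_neg]
      rw [this, add_fix_star hB3 hsn, ih, neg_fix_star hB3 hs, sub_smul, one_smul,
        sub_eq_add_neg]

omit hB3 in
lemma even_aux (w : ℤ) : ∃ k : ℤ, w * (w - 1) = 2 * k := by
  obtain ⟨k, hk⟩ := Int.even_mul_succ_self (w - 1)
  exact ⟨k, by rw [show w * (w-1) = (w-1) * ((w-1)+1) by ring, hk]; ring⟩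

lemma zsmul_star_step_up (x : B) (w : ℤ)
    (ih : ∀ c : B, bstar (w • x) c = w • bstar x c - (w * (w-1) / 2) • bstar (bstar x x) c)
    (c : B) :
    bstar ((w + 1) • x) c
      = (w + 1) • bstar x c - ((w+1) * ((w+1)-1) / 2) • bstar (bstar x x) c := by
  have hfix1 : ∀ a : B, bstar a (bstar x x) = 0 := fun a => hB3 a x x
  have hfix2 : ∀ a : B, bstar a (bstar (bstar x x) x) = 0 := fun a => hB3 a (bstar x x) x
  have hfix2' : ∀ a : B, bstar a (-((w * (w-1) / 2) • bstar (bstar x x) x)) = 0 := fun a => by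
    rw [star_neg_right, star_zsmul_right, hfix2 a, smul_zero, neg_zero]
  have hmid : bstar (bstar (w • x) x) c = w • bstar (bstar x x) c := by
    rw [ih x, sub_eq_add_neg, add_fix_star hB3 hfix2',
        fix_zsmul_star hB3 hfix1, neg_fix_star hB3 (fun a => by
          rw [star_zsmul_right, hfix2 a, smul_zero]),
        fix_zsmul_star hB3 hfix2, triple_star hB3, smul_zero, neg_zero, add_zero]
  have hsplit : (w + 1) • x = w • x + x := by rw [add_smul, one_smul]
  rw [hsplit, add_star hB3, ih c, hmid]
  have harith : (w+1) * ((w+1)-1) / 2 = w * (w-1) / 2 + w := by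
    obtain ⟨k, hk⟩ := even_aux w
    have h2 : (w+1) * ((w+1)-1) = 2 * (k + w) := by rw [show (w+1)*((w+1)-1) = w*(w-1) + 2*w by ring, hk]; ring
    rw [hk, h2, Int.mul_ediv_cancel_left _ (by norm_num : (2:ℤ) ≠ 0),
        Int.mul_ediv_cancel_left _ (by norm_num : (2:ℤ) ≠ 0)]
  rw [harith]
  simp only [add_smul, sub_smul, one_smul, neg_smul]
  abel

lemma zsmul_star_step_down (x : B) (w : ℤ)
    (ih : ∀ c : B, bstar (w • x) c = w • bstar x c - (w * (w-1) / 2) • bstar (bstar x x) c)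
    (c : B) :
    bstar ((w - 1) • x) c
      = (w - 1) • bstar x c - ((w-1) * ((w-1)-1) / 2) • bstar (bstar x x) c := by
  have hfix1 : ∀ a : B, bstar a (bstar x x) = 0 := fun a => hB3 a x x
  have hfix2 : ∀ a : B, bstar a (bstar (bstar x x) x) = 0 := fun a => hB3 a (bstar x x) x
  -- bstar (-x) c = - bstar x c - bstar (bstar x x) c
  have hnegx : bstar (-x) c = - bstar x c - bstar (bstar x x) c := by
    have h := add_star hB3 x (-x) c
    rw [add_neg_cancel, zero_star, star_neg_right, neg_fix_star hB3 hfix1] at h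
    have := h.symm
    -- 0 = bstar x c + bstar (-x) c + bstar (bstar x x) c
    have h2 : bstar x c + bstar (-x) c - -(bstar (bstar x x) c) = 0 := h.symm
    calc bstar (-x) c
        = (bstar x c + bstar (-x) c - -(bstar (bstar x x) c))
            - bstar x c - bstar (bstar x x) c := by abel
      _ = - bstar x c - bstar (bstar x x) c := by rw [h2]; abel
  -- bstar (w•x) (-x) = (-w) • bstar x x + (w*(w-1)/2) • bstar (bstar x x) x
  have hmid0 : bstar (w • x) (-x)
      = (-w) • bstar x x + (w * (w-1) / 2) • bstar (bstar x x) x := by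
    rw [star_neg_right, ih x, neg_sub, sub_eq_add_neg, ← neg_smul]
    abel
  have hmid : bstar (bstar (w • x) (-x)) c = (-w) • bstar (bstar x x) c := by
    rw [hmid0, add_fix_star hB3 (fun a => by rw [star_zsmul_right, hfix2 a, smul_zero]),
        fix_zsmul_star hB3 hfix1, fix_zsmul_star hB3 hfix2, triple_star hB3,
        smul_zero, add_zero]
  have hsplit : (w - 1) • x = w • x + (-x) := by rw [sub_smul, one_smul, sub_eq_add_neg]
  rw [hsplit, add_star hB3, ih c, hmid, hnegx]
  have harith : (w-1) * ((w-1)-1) / 2 = w * (w-1) / 2 - (w - 1) := by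
    obtain ⟨k, hk⟩ := even_aux w
    have h2 : (w-1) * ((w-1)-1) = 2 * (k - (w-1)) := by
      rw [show (w-1)*((w-1)-1) = w*(w-1) - 2*(w-1) by ring, hk]; ring
    rw [hk, h2, Int.mul_ediv_cancel_left _ (by norm_num : (2:ℤ) ≠ 0),
        Int.mul_ediv_cancel_left _ (by norm_num : (2:ℤ) ≠ 0)]
  rw [harith]
  simp only [add_smul, sub_smul, one_smul, neg_smul]
  abel

lemma zsmul_star (x : B) (z : ℤ) :
    ∀ c : B, bstar (z • x) c = z • bstar x c - (z * (z-1) / 2) • bstar (bstar x x) c := by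
  induction z using Int.induction_on with
  | zero => intro c; norm_num [zero_star]
  | succ k ih => exact zsmul_star_step_up hB3 x k ih
  | pred k ih =>
      have h := zsmul_star_step_down hB3 x (-(k:ℤ)) ih
      intro c
      have := h c
      rwa [show (-(k:ℤ) - 1) = -(k:ℤ) - 1 from rfl] at this

/-- Sum in the first argument, with an error term killed on both sides. -/
lemma sum_star_err {m : ℕ} (g : Fin m → B) (y : B) :
    ∃ e : B, (∀ a : B, bstar a e = 0) ∧ (∀ d : B, bstar e d = 0) ∧
      bstar (∑ i, g i) y = (∑ i, bstar (g i) y) + e := by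
  induction m with
  | zero =>
      refine ⟨0, fun a => star_zero_right a, fun d => zero_star d, ?_⟩
      simp [zero_star]
  | succ m ih =>
      obtain ⟨e, he1, he2, he3⟩ := ih (fun i => g i.castSucc)
      set S := ∑ i : Fin m, g i.castSucc with hS
      set t := bstar (bstar S (g (Fin.last m))) y with ht
      refine ⟨e - t, ?_, ?_, ?_⟩
      · intro a
        rw [sub_eq_add_neg, star_add_right, he1 a, star_neg_right,
            ht, hB3 a (bstar S (g (Fin.last m))) y, neg_zero, add_zero]
      · intro d
        have ht1 : ∀ a : B, bstar a t = 0 := fun a => hB3 a _ _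
        have ht2 : bstar t d = 0 := triple_star hB3 _ _ _ _
        have htn : ∀ a : B, bstar a (-t) = 0 := fun a => by
          rw [star_neg_right, ht1 a, neg_zero]
        rw [sub_eq_add_neg, add_fix_star hB3 htn, he2 d,
            neg_fix_star hB3 ht1, ht2, neg_zero, add_zero]
      · rw [Fin.sum_univ_castSucc (f := g), add_star hB3, he3,
            Fin.sum_univ_castSucc (f := fun i => bstar (g i) y)]
        abel

lemma fix_sum_star {m : ℕ} (h : Fin m → B) (hfix : ∀ i, ∀ a : B, bstar a (h i) = 0)
    (c : B) : bstar (∑ i, h i) c = ∑ i, bstar (h i) c := by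
  induction m with
  | zero => simp [zero_star]
  | succ m ih =>
      rw [Fin.sum_univ_castSucc (f := h), add_fix_star hB3 (hfix (Fin.last m)),
          ih (fun i => h i.castSucc) (fun i => hfix i.castSucc),
          Fin.sum_univ_castSucc (f := fun i => bstar (h i) c)]

lemma sum_star_formula {m : ℕ} (g : Fin m → B) (c : B) :
    bstar (∑ i, g i) c
      = ∑ i, bstar (g i) c
        - ∑ i, ∑ j, (if i < j then bstar (bstar (g i) (g j)) c else 0) := by
  induction m with
  | zero => simp [zero_star]
  | succ m ih =>
      set L := g (Fin.last m) with hL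
      set S := ∑ i : Fin m, g i.castSucc with hS
      -- the correction term
      obtain ⟨e, he1, he2, he3⟩ := sum_star_err hB3 (fun i => g i.castSucc) L
      have hcorr : bstar (bstar S L) c
          = ∑ i : Fin m, bstar (bstar (g i.castSucc) L) c := by
        rw [he3, add_fix_star hB3 he1, he2 c, add_zero,
            fix_sum_star hB3 _ (fun i a => hB3 a _ _)]
      -- double sum decomposition
      have hD : (∑ i : Fin (m+1), ∑ j : Fin (m+1),
            (if i < j then bstar (bstar (g i) (g j)) c else 0))
          = (∑ i : Fin m, ∑ j : Fin m,
              (if i < j then bstar (bstar (g i.castSucc) (g j.castSucc)) c else 0))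
            + ∑ i : Fin m, bstar (bstar (g i.castSucc) L) c := by
        rw [Fin.sum_univ_castSucc
          (f := fun i : Fin (m+1) => ∑ j : Fin (m+1),
            (if i < j then bstar (bstar (g i) (g j)) c else 0))]
        have h2 : (∑ j : Fin (m+1),
            (if Fin.last m < j then bstar (bstar (g (Fin.last m)) (g j)) c else 0)) = 0 := by
          apply Finset.sum_eq_zero
          intro j _
          rw [if_neg (not_lt.mpr (Fin.le_last j))]
        have h1 : ∀ i : Fin m, (∑ j : Fin (m+1),
              (if i.castSucc < j then bstar (bstar (g i.castSucc) (g j)) c else 0))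
            = (∑ j : Fin m,
                (if i < j then bstar (bstar (g i.castSucc) (g j.castSucc)) c else 0))
              + bstar (bstar (g i.castSucc) L) c := by
          intro i
          rw [Fin.sum_univ_castSucc
            (f := fun j : Fin (m+1) =>
              (if i.castSucc < j then bstar (bstar (g i.castSucc) (g j)) c else 0))]
          simp only [Fin.castSucc_lt_castSucc_iff, Fin.castSucc_lt_last i, if_true, hL]
        rw [h2, add_zero, Finset.sum_congr rfl (fun i _ => h1 i), Finset.sum_add_distrib]
      rw [Fin.sum_univ_castSucc (f := g), add_star hB3, ih (fun i => g i.castSucc),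
          hcorr, hD, Fin.sum_univ_castSucc (f := fun i => bstar (g i) c)]
      abel

end WithHB3

end BraceAux

open BraceAux in
theorem stmt15 {B : Type*} [LeftBrace B]
    (hB3 : ∀ a b c : B, bstar a (bstar b c) = 0)
    {m : ℕ} (b : Fin m → B) (bk : B) (n : Fin m → ℤ) (z : ℤ) :
    bstar (∑ i, n i • b i) (z • bk)
      = (∑ i, ((n i * z) • bstar (b i) bk
          - ((n i * (n i - 1) * z) / 2) • bstar (bstar (b i) (b i)) bk))
        - ∑ i, ∑ j, (if i < j then (n i * n j * z) • bstar (bstar (b i) (b j)) bk else 0) := by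
  have hdiv : ∀ w : ℤ, (w * (w - 1) * z) / 2 = z * (w * (w-1) / 2) := by
    intro w
    obtain ⟨k, hk⟩ := even_aux w
    rw [hk, show 2 * k * z = 2 * (k * z) by ring,
        Int.mul_ediv_cancel_left _ (by norm_num : (2:ℤ) ≠ 0),
        Int.mul_ediv_cancel_left _ (by norm_num : (2:ℤ) ≠ 0)]
    ring
  have key2 : ∀ i j : Fin m,
      bstar (bstar (n i • b i) (n j • b j)) bk
        = (n i * n j) • bstar (bstar (b i) (b j)) bk := by
    intro i j
    have hfix1 : ∀ a : B, bstar a ((n j * n i) • bstar (b i) (b j)) = 0 := fun a => by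
      rw [star_zsmul_right, hB3 a (b i) (b j), smul_zero]
    have hfix2 : ∀ a : B,
        bstar a ((n j * (n i * (n i - 1) / 2)) • bstar (bstar (b i) (b i)) (b j)) = 0 :=
      fun a => by rw [star_zsmul_right, hB3 a (bstar (b i) (b i)) (b j), smul_zero]
    have hfix2n : ∀ a : B,
        bstar a (-((n j * (n i * (n i - 1) / 2)) • bstar (bstar (b i) (b i)) (b j))) = 0 :=
      fun a => by rw [star_neg_right, hfix2 a, neg_zero]
    rw [star_zsmul_right, zsmul_star hB3 (b i) (n i) (b j), smul_sub, smul_smul, smul_smul,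
        sub_eq_add_neg, add_fix_star hB3 hfix2n,
        fix_zsmul_star hB3 (fun a => hB3 a (b i) (b j)),
        neg_fix_star hB3 (fun a => by
          rw [star_zsmul_right, hB3 a (bstar (b i) (b i)) (b j), smul_zero]),
        fix_zsmul_star hB3 (fun a => hB3 a (bstar (b i) (b i)) (b j)),
        triple_star hB3, smul_zero, neg_zero, add_zero, mul_comm (n j) (n i)]
  rw [star_zsmul_right, sum_star_formula hB3 (fun i => n i • b i) bk, smul_sub,
      Finset.smul_sum, Finset.smul_sum]
  congr 1
  · apply Finset.sum_congr rfl
    intro i _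
    rw [zsmul_star hB3 (b i) (n i) bk, smul_sub, smul_smul, smul_smul,
        mul_comm z (n i), hdiv (n i)]
  · apply Finset.sum_congr rfl
    intro i _
    rw [Finset.smul_sum]
    apply Finset.sum_congr rfl
    intro j _
    rw [key2 i j]
    split_ifs with h
    · rw [smul_smul, mul_comm z (n i * n j)]
    · rw [smul_zero]
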